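/- For all n₁, n₂ ≥ 1, s₁ ∈ {0,…,n₁-1}, s₂ ∈ {0,…,n₂-1}: the composition of λ_{n₁,s₁} followed by λ_{n₂,s₂} equals λ_{n₁n₂, s₁n₂ + s₂}, and moreover s₁n₂ + s₂ < n₁n₂, so the family {λ_{n,s}} is closed under composition. -/
import Mathlib


def bmul (x y : ℕ × ℕ) : ℕ × ℕ :=
  (x.1 + y.1 - min x.2 y.1, x.2 + y.2 - min x.2 y.1)

abbrev Cplus := {x : ℕ × ℕ // x.1 ≤ x.2}

instance : Mul Cplus :=
  ⟨fun x y => ⟨bmul x.1 y.1, by have hx := x.2; have hy := y.2; simp only [bmul]; omega⟩⟩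

instance : One Cplus := ⟨⟨(0, 0), le_refl 0⟩⟩

theorem Cplus.mul_def (x y : Cplus) : (x * y).1 = bmul x.1 y.1 := rfl

theorem Cplus.one_def : (1 : Cplus).1 = (0, 0) := rfl

instance : Monoid Cplus where
  mul_assoc x y z := Subtype.ext (by
    simp only [Cplus.mul_def, bmul, Prod.ext_iff]; omega)
  one_mul x := Subtype.ext (by
    have := x.2
    simp only [Cplus.mul_def, Cplus.one_def, bmul, Prod.ext_iff]; omega)
  mul_one x := Subtype.ext (by
    have := x.2
    simp only [Cplus.mul_def, Cplus.one_def, bmul, Prod.ext_iff]; omega)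

def lam (k : ℕ) : Cplus → Cplus :=
  fun x => ⟨(k * x.1.1, k * x.1.2), Nat.mul_le_mul_left k x.2⟩

def sig (l m : ℕ) : Cplus → Cplus := fun x =>
  if x.1.1 = x.1.2 then 1 else ⟨(l, l + m * (x.1.2 - x.1.1)), by omega⟩

def lamns (n s : ℕ) : Cplus → Cplus := fun x =>
  if x.1.1 = 0 then ⟨(0, n * x.1.2), Nat.zero_le _⟩
  else ⟨(n * x.1.1 - s, n * x.1.2 - s), by
    have := Nat.mul_le_mul_left n x.2; omega⟩

def vsig : Cplus → Cplus := fun x =>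
  if x.1 = (0, 0) then 1 else ⟨(x.1.1 + 1, x.1.2 + 1), by have := x.2; omega⟩

def bpow (x : ℕ × ℕ) : ℕ → ℕ × ℕ
  | 0 => (0, 0)
  | n + 1 => bmul (bpow x n) x

/-- λ_{n₁,s₁} followed by λ_{n₂,s₂} equals λ_{n₁n₂, s₁n₂+s₂}, and s₁n₂+s₂ < n₁n₂. -/
theorem lamns_comp (n₁ n₂ s₁ s₂ : ℕ) (h₁ : 1 ≤ n₁) (h₂ : 1 ≤ n₂)
    (hs₁ : s₁ < n₁) (hs₂ : s₂ < n₂) :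
    lamns n₂ s₂ ∘ lamns n₁ s₁ = lamns (n₁ * n₂) (s₁ * n₂ + s₂) ∧
    s₁ * n₂ + s₂ < n₁ * n₂ := by
  constructor
  · funext x
    obtain ⟨⟨i, j⟩, hij⟩ := x
    apply Subtype.ext
    simp only [Function.comp, lamns]
    rcases Nat.eq_zero_or_pos i with hi | hi
    · subst hi
      simp only [if_pos rfl, Prod.ext_iff]
      constructor
      · rfl
      · show n₂ * (n₁ * j) = n₁ * n₂ * j
        ring
    · have hi' : i ≠ 0 := hi.ne'
      have h1 : n₁ * i - s₁ ≠ 0 := by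
        have : n₁ ≤ n₁ * i := Nat.le_mul_of_pos_right n₁ hi
        omega
      simp only [hi', h1, if_false, Prod.ext_iff]
      have hji : i ≤ j := hij
      have hni : n₁ ≤ n₁ * i := Nat.le_mul_of_pos_right n₁ hi
      have hnij : n₁ * i ≤ n₁ * j := Nat.mul_le_mul_left n₁ hji
      have e1 : n₁ * n₂ * i = n₂ * (n₁ * i) := by ring
      have e2 : n₁ * n₂ * j = n₂ * (n₁ * j) := by ring
      have e3 : n₂ * s₁ = s₁ * n₂ := by ring
      have h4 : n₂ * s₁ ≤ n₂ * (n₁ * i) := Nat.mul_le_mul_left n₂ (by omega)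
      have h5 : n₂ * (n₁ * i) ≤ n₂ * (n₁ * j) := Nat.mul_le_mul_left n₂ hnij
      constructor
      · rw [e1, show n₁ * i - s₁ = n₁ * i - s₁ from rfl, Nat.mul_sub, e3]; omega
      · rw [e2, Nat.mul_sub, e3]; omega
  · nlinarith
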